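/- Let K be a convex body in R^d and for x ∈ ∂K let r(x) be the largest radius r ≥ 0 such that the Euclidean ball B_2^d(x - r·N(x), r) is contained in K. Then for every α ∈ (0,1), the integral of r(x)^{-α} over ∂K with respect to the surface measure is finite. -/

import Mathlib

open MeasureTheory Metric Set
open scoped ENNReal NNReal RealInnerProductSpace
set_option linter.unusedSectionVars false
set_option linter.unusedVariables false

variable {F : Type*} [NormedAddCommGroup F] [InnerProductSpace ℝ F]

lemma sw_proj_unique {C : Set F} {x v w : F} (hv : v ∈ C) (hw : w ∈ C)
    (h1 : ∀ p ∈ C, ⟪x - v, p - v⟫ ≤ 0) (h2 : ∀ p ∈ C, ⟪x - w, p - w⟫ ≤ 0) : v = w := by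
  have a1 := h1 w hw
  have a2 := h2 v hv
  have key : ⟪x - v, w - v⟫ + ⟪x - w, v - w⟫ = ‖w - v‖ ^ 2 := by
    rw [show v - w = -(w - v) from (neg_sub _ _).symm, inner_neg_right, ← sub_eq_add_neg,
      ← inner_sub_left, ← real_inner_self_eq_norm_sq]
    congr 1
    module
  have h5 : ‖w - v‖ ^ 2 ≤ 0 := key ▸ add_nonpos a1 a2
  have h6 : ‖w - v‖ = 0 := by nlinarith [norm_nonneg (w - v)]
  have h7 : w - v = 0 := by rwa [norm_eq_zero] at h6
  exact (eq_of_sub_eq_zero h7).symm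

lemma sw_exists_proj [CompleteSpace F] {C : Set F} (hC : Convex ℝ C) (hcl : IsClosed C)
    (hne : C.Nonempty) :
    ∃ P : F → F, (∀ u, P u ∈ C) ∧ (∀ u, ∀ p ∈ C, ⟪u - P u, p - P u⟫ ≤ 0) ∧
      LipschitzWith 1 P ∧ (∀ u, dist u (P u) = Metric.infDist u C) := by
  have hcomp : IsComplete C := hcl.isComplete
  choose P hPmem hPdist using exists_norm_eq_iInf_of_complete_convex hne hcomp hC
  have hchar : ∀ u, ∀ p ∈ C, ⟪u - P u, p - P u⟫ ≤ 0 := fun u =>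
    (norm_eq_iInf_iff_real_inner_le_zero hC (hPmem u)).1 (hPdist u)
  refine ⟨P, hPmem, hchar, ?_, ?_⟩
  · refine LipschitzWith.of_dist_le_mul fun u u' => ?_
    have h1 := hchar u (P u') (hPmem u')
    have h2 := hchar u' (P u) (hPmem u)
    have key : ‖P u' - P u‖ ^ 2 ≤ -⟪u - u', P u' - P u⟫ := by
      have e : ⟪u - P u, P u' - P u⟫ + ⟪u' - P u', P u - P u'⟫
          = ⟪u - u', P u' - P u⟫ + ‖P u' - P u‖ ^ 2 := by
        rw [show P u - P u' = -(P u' - P u) from (neg_sub _ _).symm, inner_neg_right,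
          ← sub_eq_add_neg, ← inner_sub_left, ← real_inner_self_eq_norm_sq, ← inner_add_left]
        congr 1
        module
      linarith [add_nonpos h1 h2]
    have hcs : -⟪u - u', P u' - P u⟫ ≤ ‖u - u'‖ * ‖P u' - P u‖ := by
      have := real_inner_le_norm (u' - u) (P u' - P u)
      have hc : ⟪u' - u, P u' - P u⟫ = -⟪u - u', P u' - P u⟫ := by
        rw [show u' - u = -(u - u') from (neg_sub _ _).symm, inner_neg_left]
      rw [hc] at this
      calc -⟪u - u', P u' - P u⟫ ≤ ‖u' - u‖ * ‖P u' - P u‖ := this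
        _ = ‖u - u'‖ * ‖P u' - P u‖ := by rw [norm_sub_rev]
    rw [NNReal.coe_one, one_mul, dist_eq_norm, dist_eq_norm, show ‖P u - P u'‖ = ‖P u' - P u‖
      from norm_sub_rev _ _]
    nlinarith [norm_nonneg (P u' - P u), norm_nonneg (u - u')]
  · intro u
    rw [Metric.infDist_eq_iInf, dist_eq_norm, hPdist u]
    congr 1
    ext w
    rw [dist_eq_norm]

lemma sw_support_vector {C : Set F} (hC : Convex ℝ C)
    (hCi : (interior C).Nonempty) {x : F} (hx : x ∈ frontier C) [CompleteSpace F] :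
    ∃ u : F, ‖u‖ = 1 ∧ ∀ p ∈ C, ⟪u, p - x⟫ ≤ 0 := by
  obtain ⟨f, hf⟩ := geometric_hahn_banach_open_point (hC.interior) isOpen_interior hx.2
  obtain ⟨a₀, ha₀⟩ := hCi
  set v : F := (InnerProductSpace.toDual ℝ F).symm f with hv
  have hinner : ∀ y, ⟪v, y⟫ = f y := fun y => InnerProductSpace.toDual_symm_apply
  have hv0 : v ≠ 0 := by
    intro h
    have h1 := hf a₀ ha₀
    have h2 : f a₀ = 0 := by rw [← hinner, h, inner_zero_left]
    have h3 : f x = 0 := by rw [← hinner, h, inner_zero_left]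
    rw [h2, h3] at h1; exact lt_irrefl _ h1
  have hle : ∀ p ∈ C, f p ≤ f x := by
    intro p hp
    have hseg : openSegment ℝ a₀ p ⊆ interior C :=
      hC.openSegment_interior_closure_subset_interior ha₀ (subset_closure hp)
    have hpc : p ∈ closure (interior C) := by
      have : p ∈ closure (openSegment ℝ a₀ p) := by
        rw [closure_openSegment]; exact right_mem_segment ℝ a₀ p
      exact closure_mono hseg this
    have : closure (interior C) ⊆ {y | f y ≤ f x} :=
      closure_minimal (fun a ha => (hf a ha).le) (isClosed_le f.continuous continuous_const)
    exact this hpc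
  refine ⟨‖v‖⁻¹ • v, ?_, ?_⟩
  · rw [norm_smul, norm_inv, norm_norm, inv_mul_cancel₀ (norm_ne_zero_iff.2 hv0)]
  · intro p hp
    rw [real_inner_smul_left]
    have : ⟪v, p - x⟫ ≤ 0 := by
      rw [inner_sub_right, hinner, hinner]
      linarith [hle p hp]
    have hvpos : 0 ≤ ‖v‖⁻¹ := by positivity
    exact mul_nonpos_of_nonneg_of_nonpos hvpos this

-- the inner parallel body
lemma sw_Kt_closed {K : Set F} (hK : IsClosed K) (t : ℝ) :
    IsClosed {y : F | closedBall y t ⊆ K} := by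
  have hset : {y : F | closedBall y t ⊆ K} = ⋂ v ∈ closedBall (0 : F) t, (fun y => y + v) ⁻¹' K := by
    ext y
    simp only [mem_setOf_eq, mem_iInter, mem_preimage]
    constructor
    · intro h v hv
      refine h ?_
      rw [mem_closedBall, dist_eq_norm]
      simpa using mem_closedBall_zero_iff.1 hv
    · intro h w hw
      have hv : w - y ∈ closedBall (0 : F) t := by
        rw [mem_closedBall_zero_iff]
        rw [mem_closedBall, dist_eq_norm] at hw
        exact hw
      have := h (w - y) hv
      simpa using this
  rw [hset]
  exact isClosed_biInter fun v _ => hK.preimage (continuous_id.add continuous_const)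

lemma sw_Kt_convex {K : Set F} (hK : Convex ℝ K) (t : ℝ) :
    Convex ℝ {y : F | closedBall y t ⊆ K} := by
  intro y₁ h₁ y₂ h₂ a b ha hb hab
  intro w hw
  have h1 : w - (a • y₁ + b • y₂) + y₁ ∈ closedBall y₁ t := by
    simp only [mem_closedBall, dist_eq_norm] at hw ⊢
    simpa using hw
  have h2 : w - (a • y₁ + b • y₂) + y₂ ∈ closedBall y₂ t := by
    simp only [mem_closedBall, dist_eq_norm] at hw ⊢
    simpa using hw
  have := hK (h₁ h1) (h₂ h2) ha hb hab
  have heq : a • (w - (a • y₁ + b • y₂) + y₁) + b • (w - (a • y₁ + b • y₂) + y₂) = w := by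
    have h3 : a • (w - (a • y₁ + b • y₂) + y₁) + b • (w - (a • y₁ + b • y₂) + y₂)
        = (a + b) • (w - (a • y₁ + b • y₂)) + (a • y₁ + b • y₂) := by module
    rw [h3, hab, one_smul]
    module
  rwa [heq] at this


-- every frontier point of the inner parallel body has a contact point on frontier K at distance t
lemma sw_contact [ProperSpace F] {K : Set F} (hKcl : IsClosed K) {t : ℝ} (ht : 0 < t) {y : F}
    (hy : y ∈ frontier {y : F | closedBall y t ⊆ K}) :
    ∃ z ∈ frontier K, dist z y = t := by
  have hyKt : y ∈ {y : F | closedBall y t ⊆ K} := (sw_Kt_closed hKcl t).frontier_subset hy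
  by_contra hemp
  push_neg at hemp
  have hcb : closedBall y t ∩ frontier K = ∅ := by
    rw [eq_empty_iff_forall_notMem]
    rintro z ⟨hz1, hz2⟩
    refine hemp z hz2 (le_antisymm (mem_closedBall.1 hz1) ?_)
    by_contra hlt
    push_neg at hlt
    have : z ∈ ball y t := mem_ball.2 hlt
    have hb : ball y t ⊆ interior K :=
      interior_maximal ((ball_subset_closedBall).trans hyKt) isOpen_ball
    exact hz2.2 (hb this)
  have hsub : closedBall y t ⊆ interior K := by
    intro z hz
    have hzK : z ∈ K := hyKt hz
    have : z ∈ closure K := subset_closure hzK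
    rw [closure_eq_interior_union_frontier] at this
    rcases this with h | h
    · exact h
    · exact absurd (show z ∈ closedBall y t ∩ frontier K from ⟨hz, h⟩)
        (by rw [hcb]; exact notMem_empty z)
  obtain ⟨ε, hε, hthick⟩ :=
    (isCompact_closedBall y t).exists_cthickening_subset_open isOpen_interior hsub
  have hball : ball y ε ⊆ {y : F | closedBall y t ⊆ K} := by
    intro y' hy'
    intro w hw
    have hwthick : w ∈ cthickening ε (closedBall y t) := by
      rw [Metric.mem_cthickening_iff]
      have hmem : w - y' + y ∈ closedBall y t := by
        rw [mem_closedBall, dist_eq_norm] at hw ⊢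
        simpa using hw
      calc EMetric.infEdist w (closedBall y t) ≤ edist w (w - y' + y) :=
            EMetric.infEdist_le_edist_of_mem hmem
        _ ≤ ENNReal.ofReal ε := by
            rw [edist_dist]
            refine ENNReal.ofReal_le_ofReal ?_
            rw [dist_eq_norm]
            have : y' - y = w - (w - y' + y) := by module
            calc ‖w - (w - y' + y)‖ = ‖y' - y‖ := by rw [← this]
              _ = dist y' y := (dist_eq_norm _ _).symm
              _ ≤ ε := (mem_ball.1 hy').le
    exact interior_subset (hthick hwthick)
  have : y ∈ interior {y : F | closedBall y t ⊆ K} :=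
    mem_interior.2 ⟨ball y ε, hball, isOpen_ball, mem_ball_self hε⟩
  exact hy.2 this

-- Claim A : if x is a frontier point with outer normal Nx, and dist(x, K_t) ≤ t, then
-- the ball of radius t at x - t Nx is inside K
lemma sw_claimA {K : Set F} (hKcl : IsClosed K) {t : ℝ} (ht : 0 < t)
    (hKt_ne : {y : F | closedBall y t ⊆ K}.Nonempty)
    (hKt_cpt : IsCompact {y : F | closedBall y t ⊆ K})
    {x Nx : F} (hx : x ∈ frontier K) (hN1 : ‖Nx‖ = 1)
    (hN2 : ∀ y ∈ K, ⟪y - x, Nx⟫ ≤ 0)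
    (hdist : Metric.infDist x {y : F | closedBall y t ⊆ K} ≤ t) :
    closedBall (x - t • Nx) t ⊆ K := by
  obtain ⟨y, hyKt, hyd⟩ := hKt_cpt.exists_infDist_eq_dist hKt_ne x
  have hdxy : dist x y = t := by
    refine le_antisymm (hyd ▸ hdist) ?_
    by_contra hlt
    push_neg at hlt
    have : x ∈ ball y t := mem_ball.2 hlt
    have hb : ball y t ⊆ interior K := interior_maximal (ball_subset_closedBall.trans hyKt) isOpen_ball
    exact hx.2 (hb this)
  have hwK : y + t • Nx ∈ K := by
    refine hyKt ?_
    rw [mem_closedBall, dist_eq_norm]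
    simp [norm_smul, hN1, abs_of_pos ht]
  have hinner : ⟪y - x, Nx⟫ ≤ -t := by
    have := hN2 _ hwK
    have hexp : ⟪y + t • Nx - x, Nx⟫ = ⟪y - x, Nx⟫ + t := by
      rw [show y + t • Nx - x = (y - x) + t • Nx by module, inner_add_left, real_inner_smul_left,
        real_inner_self_eq_norm_sq, hN1]
      ring
    linarith [hexp ▸ this]
  have hnormxy : ‖x - y‖ = t := by rwa [dist_eq_norm] at hdxy
  have hkey : ‖(x - y) - t • Nx‖ ^ 2 ≤ 0 := by
    have hip : t ≤ ⟪x - y, Nx⟫ := by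
      have : ⟪x - y, Nx⟫ = -⟪y - x, Nx⟫ := by
        rw [show x - y = -(y - x) from (neg_sub _ _).symm, inner_neg_left]
      linarith
    have hexpand := norm_sub_sq_real (x - y) (t • Nx)
    rw [norm_smul, hN1, real_inner_smul_right] at hexpand
    rw [hexpand, hnormxy, Real.norm_eq_abs, abs_of_pos ht]
    nlinarith
  have hzero : (x - y) - t • Nx = 0 := by
    rw [← norm_eq_zero]
    nlinarith [norm_nonneg ((x - y) - t • Nx), sq_nonneg ‖(x - y) - t • Nx‖]
  have hy_eq : y = x - t • Nx := by
    have := eq_of_sub_eq_zero hzero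
    rw [← this]; module
  rw [← hy_eq]
  exact hyKt

-- ray surjectivity: the metric projection onto C maps frontier D onto frontier C when C ⊆ D
lemma sw_proj_surj [CompleteSpace F] {C D : Set F} (hC : Convex ℝ C) (hCcl : IsClosed C)
    (hCi : (interior C).Nonempty) (hCD : C ⊆ D) (hDcpt : IsCompact D)
    {P : F → F} (hPmem : ∀ u, P u ∈ C)
    (hchar : ∀ u, ∀ p ∈ C, ⟪u - P u, p - P u⟫ ≤ 0) :
    frontier C ⊆ P '' frontier D := by
  intro w hw
  obtain ⟨u, hu1, hu2⟩ := sw_support_vector hC hCi hw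
  have hwC : w ∈ C := hCcl.frontier_subset hw
  set S : Set ℝ := {s : ℝ | 0 ≤ s ∧ w + s • u ∈ D} with hS
  have hS0 : (0 : ℝ) ∈ S := ⟨le_refl 0, by simpa using hCD hwC⟩
  have hSne : S.Nonempty := ⟨0, hS0⟩
  obtain ⟨Rb, hRb⟩ := hDcpt.isBounded.subset_closedBall w
  have hSbdd : BddAbove S := by
    refine ⟨Rb, fun s hs => ?_⟩
    have := hRb hs.2
    rw [mem_closedBall, dist_eq_norm] at this
    have hnorm : ‖w + s • u - w‖ = s := by
      rw [show w + s • u - w = s • u by module, norm_smul, hu1, mul_one,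
        Real.norm_eq_abs, abs_of_nonneg hs.1]
    rwa [hnorm] at this
  have hScl : IsClosed S := by
    have : S = Ici (0:ℝ) ∩ (fun s : ℝ => w + s • u) ⁻¹' D := by
      ext s; simp [hS, Set.mem_Ici, and_comm]
    rw [this]
    exact isClosed_Ici.inter (hDcpt.isClosed.preimage (by fun_prop))
  set s₀ := sSup S with hs₀
  have hs₀S : s₀ ∈ S := hScl.csSup_mem hSne hSbdd
  set q := w + s₀ • u with hq
  have hqD : q ∈ D := hs₀S.2
  have hqfr : q ∈ frontier D := by
    rw [frontier, hDcpt.isClosed.closure_eq, mem_diff]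
    refine ⟨hqD, fun hint => ?_⟩
    obtain ⟨ε, hε, hball⟩ := mem_interior_iff_mem_nhds.1 hint |> Metric.mem_nhds_iff.1
    have hmem : w + (s₀ + ε/2) • u ∈ D := by
      refine hball ?_
      rw [mem_ball, dist_eq_norm]
      rw [show w + (s₀ + ε/2) • u - q = (ε/2) • u by rw [hq]; module]
      rw [norm_smul, hu1, mul_one, Real.norm_eq_abs, abs_of_pos (by linarith)]
      linarith
    have : s₀ + ε/2 ∈ S := ⟨by linarith [hs₀S.1], hmem⟩
    have := le_csSup hSbdd this
    linarith
  refine ⟨q, hqfr, ?_⟩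
  refine sw_proj_unique (hPmem q) hwC (hchar q) ?_
  intro p hp
  rw [show q - w = s₀ • u by rw [hq]; module, real_inner_smul_left]
  exact mul_nonpos_of_nonneg_of_nonpos hs₀S.1 (hu2 p hp)
lemma sw_coord_le {m : ℕ} (a : EuclideanSpace ℝ (Fin m)) (j : Fin m) : |a j| ≤ ‖a‖ := by
  rw [EuclideanSpace.norm_eq, show |a j| = Real.sqrt (‖a j‖ ^ 2) by
    rw [Real.sqrt_sq (norm_nonneg _), Real.norm_eq_abs]]
  exact Real.sqrt_le_sqrt (Finset.single_le_sum (f := fun k => ‖a k‖ ^ 2)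
    (fun k _ => sq_nonneg _) (Finset.mem_univ j))

lemma sw_graph_piece {m : ℕ} {K S : Set (EuclideanSpace ℝ (Fin (m+1)))}
    (hKb : Bornology.IsBounded K)
    {u : EuclideanSpace ℝ (Fin (m+1)) → EuclideanSpace ℝ (Fin (m+1))}
    {δ ε : ℝ} (hδ : 0 < δ) (hε : ε = 1 ∨ ε = -1) (i : Fin (m+1))
    (hS : ∀ x ∈ S, x ∈ K ∧ ‖u x‖ = 1 ∧ (∀ p ∈ K, ⟪u x, p - x⟫ ≤ 0) ∧ δ ≤ ε * u x i) :
    μH[(m : ℝ)] S < ⊤ := by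
  classical
  rcases S.eq_empty_or_nonempty with rfl | hSne
  · simp
  have hε2 : ε * ε = 1 := by rcases hε with h | h <;> rw [h] <;> norm_num
  have hεabs : |ε| = 1 := by rcases hε with h | h <;> rw [h] <;> norm_num
  set q : EuclideanSpace ℝ (Fin (m+1)) → (Fin (m+1) → ℝ) :=
    fun x j => if j = i then 0 else x j with hqdef
  -- coordinates off i are controlled by dist (q x) (q x')
  have hcoord : ∀ x x' : EuclideanSpace ℝ (Fin (m+1)), ∀ j, j ≠ i →
      |x' j - x j| ≤ dist (q x) (q x') := by
    intro x x' j hj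
    have h := dist_le_pi_dist (q x) (q x') j
    rw [Real.dist_eq] at h
    simp only [hqdef, if_neg hj] at h
    rwa [abs_sub_comm]
  have aux : ∀ x ∈ S, ∀ x' ∈ S, 0 ≤ ε * (x' i - x i) →
      δ * (ε * (x' i - x i)) ≤ (m + 1) * dist (q x) (q x') := by
    intro x hx x' hx' hsign
    obtain ⟨hxK, hxu, hxsupp, hxi⟩ := hS x hx
    have hs0 : (0:ℝ) ≤ dist (q x) (q x') := dist_nonneg
    have hsupp := hxsupp x' (hS x' hx').1
    have hinner : ⟪u x, x' - x⟫ = ∑ j, u x j * (x' j - x j) := by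
      rw [PiLp.inner_apply]
      congr 1
      funext j
      rw [PiLp.sub_apply, RCLike.inner_apply', conj_trivial]
    have hsplit : ∑ j, u x j * (x' j - x j)
        = (∑ j ∈ Finset.univ.erase i, u x j * (x' j - x j)) + u x i * (x' i - x i) :=
      (Finset.sum_erase_add _ _ (Finset.mem_univ i)).symm
    have hbound : |∑ j ∈ Finset.univ.erase i, u x j * (x' j - x j)|
        ≤ (m + 1) * dist (q x) (q x') := by
      have h1 : ∀ j ∈ Finset.univ.erase i, |u x j * (x' j - x j)| ≤ dist (q x) (q x') := by
        intro j hj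
        rw [abs_mul]
        have hu1 : |u x j| ≤ 1 := by
          calc |u x j| ≤ ‖u x‖ := sw_coord_le (u x) j
            _ = 1 := hxu
        have hd := hcoord x x' j (Finset.ne_of_mem_erase hj)
        calc |u x j| * |x' j - x j| ≤ 1 * dist (q x) (q x') :=
              mul_le_mul hu1 hd (abs_nonneg _) zero_le_one
          _ = dist (q x) (q x') := one_mul _
      calc |∑ j ∈ Finset.univ.erase i, u x j * (x' j - x j)|
          ≤ ∑ j ∈ Finset.univ.erase i, |u x j * (x' j - x j)| :=
            Finset.abs_sum_le_sum_abs _ _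
        _ ≤ ∑ _j ∈ Finset.univ.erase i, dist (q x) (q x') := Finset.sum_le_sum h1
        _ = ((Finset.univ.erase i).card : ℝ) * dist (q x) (q x') := by
            rw [Finset.sum_const, nsmul_eq_mul]
        _ ≤ (m + 1) * dist (q x) (q x') := by
            refine mul_le_mul_of_nonneg_right ?_ hs0
            have h2 : (Finset.univ.erase i).card ≤ m + 1 :=
              le_trans Finset.card_erase_le (by simp)
            exact_mod_cast h2
    have hmain : u x i * (x' i - x i) ≤ (m + 1) * dist (q x) (q x') := by
      have he : u x i * (x' i - x i) = ⟪u x, x' - x⟫ - ∑ j ∈ Finset.univ.erase i,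
          u x j * (x' j - x j) := by
        rw [hinner, hsplit]; ring
      have h1 : -((m+1) * dist (q x) (q x')) ≤ ∑ j ∈ Finset.univ.erase i,
          u x j * (x' j - x j) := (abs_le.1 hbound).1
      linarith
    calc δ * (ε * (x' i - x i)) ≤ (ε * u x i) * (ε * (x' i - x i)) :=
          mul_le_mul_of_nonneg_right hxi hsign
      _ = (ε * ε) * (u x i * (x' i - x i)) := by ring
      _ = u x i * (x' i - x i) := by rw [hε2]; ring
      _ ≤ (m + 1) * dist (q x) (q x') := hmain
  set C₂ : ℝ := Real.sqrt (m + 1) * (1 + (m + 1) / δ) with hC₂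
  have hC₂0 : 0 ≤ C₂ := by positivity
  have key : ∀ x ∈ S, ∀ x' ∈ S, dist x x' ≤ C₂ * dist (q x) (q x') := by
    intro x hx x' hx'
    have hs0 : (0:ℝ) ≤ dist (q x) (q x') := dist_nonneg
    have hi : |x' i - x i| ≤ (m + 1) * dist (q x) (q x') / δ := by
      rcases le_total 0 (ε * (x' i - x i)) with h | h
      · have h1 := aux x hx x' hx' h
        have habs : |x' i - x i| = ε * (x' i - x i) := by
          rw [show |x' i - x i| = |ε * (x' i - x i)| by rw [abs_mul, hεabs, one_mul],
            abs_of_nonneg h]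
        rw [habs, le_div_iff₀ hδ]
        linarith
      · have hsign : 0 ≤ ε * (x i - x' i) := by nlinarith
        have h1 := aux x' hx' x hx hsign
        rw [dist_comm (q x') (q x)] at h1
        have habs : |x' i - x i| = ε * (x i - x' i) := by
          rw [abs_sub_comm, show |x i - x' i| = |ε * (x i - x' i)| by
            rw [abs_mul, hεabs, one_mul], abs_of_nonneg hsign]
        rw [habs, le_div_iff₀ hδ]
        linarith
    have hB0 : (0:ℝ) ≤ (m + 1) * dist (q x) (q x') / δ + dist (q x) (q x') := by positivity
    have hBj : ∀ j, |x j - x' j| ≤ (m + 1) * dist (q x) (q x') / δ + dist (q x) (q x') := by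
      intro j
      rcases eq_or_ne j i with rfl | hj
      · rw [abs_sub_comm]
        linarith
      · have h3 := hcoord x x' j hj
        rw [abs_sub_comm]
        have h2 : (0:ℝ) ≤ (m + 1) * dist (q x) (q x') / δ := by positivity
        linarith
    have hsum : ∑ j, dist (x j) (x' j) ^ 2
        ≤ (m + 1) * ((m + 1) * dist (q x) (q x') / δ + dist (q x) (q x')) ^ 2 := by
      calc ∑ j, dist (x j) (x' j) ^ 2
          ≤ ∑ _j : Fin (m+1), ((m + 1) * dist (q x) (q x') / δ + dist (q x) (q x')) ^ 2 := by
            refine Finset.sum_le_sum fun j _ => ?_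
            rw [Real.dist_eq]
            exact pow_le_pow_left₀ (abs_nonneg _) (hBj j) 2
        _ = (m + 1) * ((m + 1) * dist (q x) (q x') / δ + dist (q x) (q x')) ^ 2 := by
            rw [Finset.sum_const, nsmul_eq_mul, Finset.card_univ, Fintype.card_fin]
            push_cast
            ring
    rw [EuclideanSpace.dist_eq]
    calc Real.sqrt (∑ j, dist (x j) (x' j) ^ 2)
        ≤ Real.sqrt ((m + 1) * ((m + 1) * dist (q x) (q x') / δ + dist (q x) (q x')) ^ 2) :=
          Real.sqrt_le_sqrt hsum
      _ = Real.sqrt (m + 1) * ((m + 1) * dist (q x) (q x') / δ + dist (q x) (q x')) := by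
          rw [Real.sqrt_mul (by positivity), Real.sqrt_sq hB0]
      _ = C₂ * dist (q x) (q x') := by
          rw [hC₂]
          field_simp
          ring
  have hinj : S.InjOn q := by
    intro x hx x' hx' hq
    have := key x hx x' hx'
    rw [hq, dist_self, mul_zero] at this
    exact dist_le_zero.1 this
  have himg : S = (Function.invFunOn q S) '' (q '' S) := by
    apply Subset.antisymm
    · intro x hx
      refine ⟨q x, mem_image_of_mem q hx, ?_⟩
      exact hinj (Function.invFunOn_mem ⟨x, hx, rfl⟩) hx (Function.invFunOn_eq ⟨x, hx, rfl⟩)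
    · rintro y ⟨a, ⟨x, hx, rfl⟩, rfl⟩
      exact Function.invFunOn_mem ⟨x, hx, rfl⟩
  have hlip : LipschitzOnWith C₂.toNNReal (Function.invFunOn q S) (q '' S) := by
    refine LipschitzOnWith.of_dist_le_mul fun a ha b hb => ?_
    obtain ⟨x, hx, rfl⟩ := ha
    obtain ⟨x', hx', rfl⟩ := hb
    have hxa : Function.invFunOn q S (q x) = x :=
      hinj (Function.invFunOn_mem ⟨x, hx, rfl⟩) hx (Function.invFunOn_eq ⟨x, hx, rfl⟩)
    have hxb : Function.invFunOn q S (q x') = x' :=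
      hinj (Function.invFunOn_mem ⟨x', hx', rfl⟩) hx' (Function.invFunOn_eq ⟨x', hx', rfl⟩)
    rw [hxa, hxb, Real.coe_toNNReal _ hC₂0]
    exact key x hx x' hx'
  have hm0 : (0:ℝ) ≤ (m:ℝ) := by positivity
  have step1 : μH[(m:ℝ)] S ≤ (C₂.toNNReal : ℝ≥0∞) ^ (m:ℝ) * μH[(m:ℝ)] (q '' S) := by
    calc μH[(m:ℝ)] S = μH[(m:ℝ)] ((Function.invFunOn q S) '' (q '' S)) := by rw [← himg]
      _ ≤ (C₂.toNNReal : ℝ≥0∞) ^ (m:ℝ) * μH[(m:ℝ)] (q '' S) :=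
          hlip.hausdorffMeasure_image_le hm0
  -- now bound μH (q '' S) in the pi space
  set ins : (Fin m → ℝ) → (Fin (m+1) → ℝ) := fun a => i.insertNth (0:ℝ) a with hins
  have hiso : Isometry ins := by
    refine Isometry.of_dist_eq fun a b => ?_
    refine le_antisymm ?_ ?_
    · refine (dist_pi_le_iff dist_nonneg).2 fun j => ?_
      rcases eq_or_ne j i with rfl | hj
      · simp [hins, Fin.insertNth_apply_same, dist_nonneg]
      · obtain ⟨k, rfl⟩ := Fin.exists_succAbove_eq hj
        simp only [hins, Fin.insertNth_apply_succAbove]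
        exact dist_le_pi_dist a b k
    · refine (dist_pi_le_iff dist_nonneg).2 fun k => ?_
      have : dist (a k) (b k) = dist (ins a (i.succAbove k)) (ins b (i.succAbove k)) := by
        simp [hins, Fin.insertNth_apply_succAbove]
      rw [this]
      exact dist_le_pi_dist (ins a) (ins b) (i.succAbove k)
  have himg2 : q '' S ⊆ ins '' (i.removeNth '' (q '' S)) := by
    rintro w ⟨x, hx, rfl⟩
    have h0 : q x i = 0 := by simp [hqdef]
    have : ins (i.removeNth (q x)) = q x := by
      rw [hins, show (0:ℝ) = q x i from h0.symm]
      exact Fin.insertNth_self_removeNth i (q x)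
    exact ⟨i.removeNth (q x), mem_image_of_mem _ (mem_image_of_mem q hx), this⟩
  obtain ⟨Rb, hRb⟩ := hKb.subset_closedBall 0
  have hRb0 : 0 ≤ max Rb 0 := le_max_right _ _
  have hBbd : i.removeNth '' (q '' S) ⊆ closedBall (0 : Fin m → ℝ) (max Rb 0) := by
    rintro b ⟨w, ⟨x, hx, rfl⟩, rfl⟩
    rw [mem_closedBall, dist_zero_right]
    rw [pi_norm_le_iff_of_nonneg hRb0]
    intro k
    have hxK := (hS x hx).1
    have hxb : ‖x‖ ≤ Rb := by
      have := hRb hxK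
      rwa [mem_closedBall, dist_zero_right] at this
    have : |q x (i.succAbove k)| ≤ ‖x‖ := by
      rcases eq_or_ne (i.succAbove k) i with he | he
      · simp [hqdef, he, norm_nonneg]
      · simp only [hqdef, if_neg he]
        exact sw_coord_le x _
    calc ‖(i.removeNth (q x)) k‖ = |q x (i.succAbove k)| := by
          simp [Fin.removeNth, Real.norm_eq_abs]
      _ ≤ ‖x‖ := this
      _ ≤ max Rb 0 := le_trans hxb (le_max_left _ _)
  have step2 : μH[(m:ℝ)] (q '' S) < ⊤ := by
    calc μH[(m:ℝ)] (q '' S) ≤ μH[(m:ℝ)] (ins '' (i.removeNth '' (q '' S))) :=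
          measure_mono himg2
      _ = μH[(m:ℝ)] (i.removeNth '' (q '' S)) :=
          hiso.hausdorffMeasure_image (Or.inl hm0) _
      _ = volume (i.removeNth '' (q '' S)) := by
          rw [show (m:ℝ) = (Fintype.card (Fin m) : ℝ) by simp, hausdorffMeasure_pi_real]
      _ ≤ volume (closedBall (0 : Fin m → ℝ) (max Rb 0)) := measure_mono hBbd
      _ < ⊤ := (isCompact_closedBall _ _).measure_lt_top
  calc μH[(m:ℝ)] S ≤ (C₂.toNNReal : ℝ≥0∞) ^ (m:ℝ) * μH[(m:ℝ)] (q '' S) := step1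
    _ < ⊤ := by
        refine ENNReal.mul_lt_top ?_ step2
        exact ENNReal.rpow_lt_top_of_nonneg hm0 ENNReal.coe_ne_top

lemma sw_surface_fin {m : ℕ} {K : Set (EuclideanSpace ℝ (Fin (m+1)))} (hK : IsCompact K)
    (hKc : Convex ℝ K) (hKi : (interior K).Nonempty) :
    μH[(m : ℝ)] (frontier K) < ⊤ := by
  classical
  have hsupp : ∀ x ∈ frontier K, ∃ u : EuclideanSpace ℝ (Fin (m+1)),
      ‖u‖ = 1 ∧ ∀ p ∈ K, ⟪u, p - x⟫ ≤ 0 := fun x hx => sw_support_vector hKc hKi hx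
  choose! u hu1 hu2 using hsupp
  set δ : ℝ := (Real.sqrt (m + 1))⁻¹ with hδdef
  have hδ : 0 < δ := by positivity
  set Sp : Fin (m+1) → Set (EuclideanSpace ℝ (Fin (m+1))) :=
    fun i => {x | x ∈ frontier K ∧ δ ≤ u x i} with hSp
  set Sm : Fin (m+1) → Set (EuclideanSpace ℝ (Fin (m+1))) :=
    fun i => {x | x ∈ frontier K ∧ δ ≤ -(u x i)} with hSm
  have hKfr : frontier K ⊆ K := hK.isClosed.frontier_subset
  have hcover : frontier K ⊆ ⋃ i, (Sp i ∪ Sm i) := by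
    intro x hx
    have h1 : ‖u x‖ = 1 := hu1 x hx
    have h2 : ∃ i, δ ≤ |u x i| := by
      by_contra hcon
      push_neg at hcon
      have hsum1 : ∑ j, ‖u x j‖ ^ 2 = 1 := by
        have := EuclideanSpace.norm_eq (u x)
        rw [h1] at this
        have h3 : Real.sqrt (∑ j, ‖u x j‖ ^ 2) = 1 := this.symm
        have h4 := congrArg (· ^ 2) h3
        simpa [Real.sq_sqrt (Finset.sum_nonneg fun j _ => sq_nonneg _)] using h4
      have hlt : ∑ j, ‖u x j‖ ^ 2 < ∑ _j : Fin (m+1), δ ^ 2 := by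
        refine Finset.sum_lt_sum_of_nonempty Finset.univ_nonempty fun j _ => ?_
        have := hcon j
        rw [Real.norm_eq_abs]
        exact pow_lt_pow_left₀ this (abs_nonneg _) (by norm_num)
      have hδsq : ∑ _j : Fin (m+1), δ ^ 2 = 1 := by
        rw [Finset.sum_const, nsmul_eq_mul, Finset.card_univ, Fintype.card_fin, hδdef]
        rw [inv_pow, Real.sq_sqrt (by positivity)]
        field_simp
        norm_num
      rw [hsum1, hδsq] at hlt
      exact lt_irrefl _ hlt
    obtain ⟨i, hi⟩ := h2
    rcases abs_cases (u x i) with ⟨he, _⟩ | ⟨he, _⟩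
    · exact mem_iUnion.2 ⟨i, Or.inl ⟨hx, he ▸ hi⟩⟩
    · exact mem_iUnion.2 ⟨i, Or.inr ⟨hx, by rw [he] at hi; linarith⟩⟩
  have hSpfin : ∀ i, μH[(m : ℝ)] (Sp i) < ⊤ := by
    intro i
    refine sw_graph_piece (u := u) (δ := δ) (ε := 1) hK.isBounded hδ (Or.inl rfl) i ?_
    intro x hx
    exact ⟨hKfr hx.1, hu1 x hx.1, hu2 x hx.1, by rw [one_mul]; exact hx.2⟩
  have hSmfin : ∀ i, μH[(m : ℝ)] (Sm i) < ⊤ := by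
    intro i
    refine sw_graph_piece (u := u) (δ := δ) (ε := -1) hK.isBounded hδ (Or.inr rfl) i ?_
    intro x hx
    refine ⟨hKfr hx.1, hu1 x hx.1, hu2 x hx.1, ?_⟩
    have := hx.2
    linarith [hx.2]
  calc μH[(m : ℝ)] (frontier K) ≤ μH[(m : ℝ)] (⋃ i, (Sp i ∪ Sm i)) := measure_mono hcover
    _ ≤ ∑' i, μH[(m : ℝ)] (Sp i ∪ Sm i) := measure_iUnion_le _
    _ = ∑ i, μH[(m : ℝ)] (Sp i ∪ Sm i) := tsum_fintype _
    _ < ⊤ := by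
        refine ENNReal.sum_lt_top.2 fun i _ => ?_
        calc μH[(m : ℝ)] (Sp i ∪ Sm i) ≤ μH[(m : ℝ)] (Sp i) + μH[(m : ℝ)] (Sm i) :=
              measure_union_le _ _
          _ < ⊤ := ENNReal.add_lt_top.2 ⟨hSpfin i, hSmfin i⟩

lemma sw_bad_bound {m : ℕ} {K : Set (EuclideanSpace ℝ (Fin (m+1)))} (hK : IsCompact K)
    (hKc : Convex ℝ K) {z₀ : EuclideanSpace ℝ (Fin (m+1))} {ρ : ℝ} (hρ : 0 < ρ)
    (hball : closedBall z₀ ρ ⊆ K) {t : ℝ} (ht : 0 < t) (htρ : t ≤ ρ / 2) :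
    ENNReal.ofReal ((1 - t/ρ) ^ m) * μH[(m:ℝ)] (frontier K)
      ≤ μH[(m:ℝ)] {x | x ∈ frontier K ∧ Metric.infDist x {y | closedBall y t ⊆ K} ≤ t} := by
  classical
  have hm0 : (0:ℝ) ≤ (m:ℝ) := by positivity
  set Kt : Set (EuclideanSpace ℝ (Fin (m+1))) := {y | closedBall y t ⊆ K} with hKt
  set G : Set (EuclideanSpace ℝ (Fin (m+1))) :=
    {x | x ∈ frontier K ∧ Metric.infDist x Kt ≤ t} with hG
  have hKtcl : IsClosed Kt := sw_Kt_closed hK.isClosed t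
  have hKtcx : Convex ℝ Kt := sw_Kt_convex hKc t
  have hKtK : Kt ⊆ K := fun y hy => hy (mem_closedBall_self ht.le)
  have hKtcpt : IsCompact Kt := hK.of_isClosed_subset hKtcl hKtK
  have hz₀ : z₀ ∈ Kt := by
    intro w hw
    exact hball (closedBall_subset_closedBall (by linarith) hw)
  set c : ℝ := 1 - t/ρ with hcdef
  have htρ2 : t/ρ ≤ 1/2 := by
    rw [div_le_div_iff₀ hρ (by norm_num)]
    linarith
  have hc : 0 < c := by
    rw [hcdef]
    have : t/ρ ≤ 1/2 := htρ2
    linarith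
  have hc1 : c ≤ 1 := by
    rw [hcdef]
    have : 0 < t/ρ := div_pos ht hρ
    linarith
  have hz₀int : z₀ ∈ interior K :=
    mem_interior.2 ⟨ball z₀ ρ, ball_subset_closedBall.trans hball, isOpen_ball, mem_ball_self hρ⟩
  set e : EuclideanSpace ℝ (Fin (m+1)) ≃ₜ EuclideanSpace ℝ (Fin (m+1)) :=
    (Homeomorph.smulOfNeZero c hc.ne').trans (Homeomorph.addLeft (z₀ - c • z₀)) with he
  have heq : ∀ x, AffineMap.homothety z₀ c x = e x := by
    intro x
    have h1 : e x = (z₀ - c • z₀) + c • x := rfl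
    rw [h1, AffineMap.homothety_apply]
    simp only [vsub_eq_sub, vadd_eq_add]
    module
  set K' : Set (EuclideanSpace ℝ (Fin (m+1))) := AffineMap.homothety z₀ c '' K with hK'
  have hK'e : K' = e '' K := by
    rw [hK']
    exact image_congr fun x _ => heq x
  have hK'cl : IsClosed K' := by rw [hK'e]; exact e.isClosedMap K hK.isClosed
  have hK'cx : Convex ℝ K' := hKc.affine_image _
  have hK'i : (interior K').Nonempty := by
    rw [hK'e, ← Homeomorph.image_interior]
    exact ⟨e z₀, mem_image_of_mem e hz₀int⟩
  have hK'ne : K'.Nonempty := ⟨AffineMap.homothety z₀ c z₀, mem_image_of_mem _ (hball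
    (mem_closedBall_self hρ.le))⟩
  have hfr' : frontier K' = AffineMap.homothety z₀ c '' frontier K := by
    rw [hK'e, ← Homeomorph.image_frontier]
    exact (image_congr fun x _ => heq x).symm
  have hscale : μH[(m:ℝ)] (frontier K') = ENNReal.ofReal (c ^ m) * μH[(m:ℝ)] (frontier K) := by
    rw [hfr', hausdorffMeasure_homothety_image hm0 z₀ hc.ne' (frontier K)]
    rw [ENNReal.smul_def, smul_eq_mul]
    congr 1
    rw [ENNReal.coe_rpow_of_nonneg _ hm0]
    have h1 : (‖c‖₊ : ℝ≥0∞) = ENNReal.ofReal c := by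
      rw [Real.nnnorm_of_nonneg hc.le, ENNReal.ofReal_eq_coe_nnreal hc.le]
    rw [h1, ENNReal.ofReal_rpow_of_pos hc, Real.rpow_natCast]
  -- K' ⊆ Kt
  have hK'sub : K' ⊆ Kt := by
    rintro _ ⟨y, hyK, rfl⟩
    intro w hw
    set s : ℝ := t/ρ with hs
    have hs0 : 0 < s := div_pos ht hρ
    set uu : EuclideanSpace ℝ (Fin (m+1)) :=
      z₀ + s⁻¹ • (w - AffineMap.homothety z₀ c y) with huu
    have huball : uu ∈ closedBall z₀ ρ := by
      rw [mem_closedBall, dist_eq_norm, huu]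
      rw [show z₀ + s⁻¹ • (w - AffineMap.homothety z₀ c y) - z₀
          = s⁻¹ • (w - AffineMap.homothety z₀ c y) by module]
      rw [norm_smul, Real.norm_eq_abs, abs_of_pos (inv_pos.2 hs0)]
      have hwd : ‖w - AffineMap.homothety z₀ c y‖ ≤ t := by
        rw [mem_closedBall, dist_eq_norm] at hw
        exact hw
      calc s⁻¹ * ‖w - AffineMap.homothety z₀ c y‖ ≤ s⁻¹ * t :=
            mul_le_mul_of_nonneg_left hwd (inv_pos.2 hs0).le
        _ = ρ := by rw [hs]; field_simp
    have hw_eq : w = c • y + s • uu := by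
      rw [huu, smul_add, ← smul_assoc, smul_eq_mul, mul_inv_cancel₀ hs0.ne', one_smul,
        AffineMap.homothety_apply]
      rw [show (s : ℝ) • z₀ = s • z₀ from rfl]
      have : c • y + s • z₀ = c • (y -ᵥ z₀) +ᵥ z₀ := by
        rw [vsub_eq_sub, vadd_eq_add, hcdef, hs]
        module
      rw [show c • y + (s • z₀ + (w - (c • (y -ᵥ z₀) +ᵥ z₀)))
          = (c • y + s • z₀) - (c • (y -ᵥ z₀) +ᵥ z₀) + w by module, this]
      module
    rw [hw_eq]
    exact hKc hyK (hball huball) hc.le hs0.le (by rw [hcdef, hs]; ring)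
  -- projection onto K' maps frontier Kt onto frontier K'
  obtain ⟨P', hP'mem, hP'char, hP'lip, hP'dist⟩ := sw_exists_proj hK'cx hK'cl hK'ne
  have hstepA : μH[(m:ℝ)] (frontier K') ≤ μH[(m:ℝ)] (frontier Kt) := by
    have hsurj := sw_proj_surj hK'cx hK'cl hK'i hK'sub hKtcpt hP'mem hP'char
    calc μH[(m:ℝ)] (frontier K') ≤ μH[(m:ℝ)] (P' '' frontier Kt) := measure_mono hsurj
      _ ≤ ((1:ℝ≥0) : ℝ≥0∞) ^ (m:ℝ) * μH[(m:ℝ)] (frontier Kt) :=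
          hP'lip.hausdorffMeasure_image_le hm0 _
      _ = μH[(m:ℝ)] (frontier Kt) := by
          rw [ENNReal.coe_one, ENNReal.one_rpow, one_mul]
  -- projection onto Kt maps G onto frontier Kt
  obtain ⟨P, hPmem, hPchar, hPlip, hPdist⟩ := sw_exists_proj hKtcx hKtcl ⟨z₀, hz₀⟩
  have hstepB : μH[(m:ℝ)] (frontier Kt) ≤ μH[(m:ℝ)] G := by
    have hsub2 : frontier Kt ⊆ P '' G := by
      intro y hy
      obtain ⟨z, hzfr, hzd⟩ := sw_contact hK.isClosed ht hy
      have hyKt : y ∈ Kt := hKtcl.frontier_subset hy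
      have hinf_le : Metric.infDist z Kt ≤ t :=
        le_trans (Metric.infDist_le_dist_of_mem hyKt) (le_of_eq hzd)
      have hzG : z ∈ G := ⟨hzfr, hinf_le⟩
      have hinf_ge : t ≤ dist z (P z) := by
        by_contra hlt
        push_neg at hlt
        have hb : ball (P z) t ⊆ interior K :=
          interior_maximal (ball_subset_closedBall.trans (hPmem z)) isOpen_ball
        exact hzfr.2 (hb (mem_ball.2 hlt))
      have hdzy : ‖z - y‖ = Metric.infDist z Kt := by
        rw [← dist_eq_norm, hzd]
        refine le_antisymm ?_ hinf_le
        calc t ≤ dist z (P z) := hinf_ge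
          _ = Metric.infDist z Kt := hPdist z
      have hiInf : (⨅ w : Kt, ‖z - (w:EuclideanSpace ℝ (Fin (m+1)))‖) = Metric.infDist z Kt := by
        rw [Metric.infDist_eq_iInf]
        exact iInf_congr fun w => (dist_eq_norm z w).symm
      have char_y : ∀ p ∈ Kt, ⟪z - y, p - y⟫ ≤ 0 :=
        (norm_eq_iInf_iff_real_inner_le_zero hKtcx hyKt).1 (by rw [hiInf, hdzy])
      exact ⟨z, hzG, sw_proj_unique (hPmem z) hyKt (hPchar z) char_y⟩
    calc μH[(m:ℝ)] (frontier Kt) ≤ μH[(m:ℝ)] (P '' G) := measure_mono hsub2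
      _ ≤ ((1:ℝ≥0) : ℝ≥0∞) ^ (m:ℝ) * μH[(m:ℝ)] G := hPlip.hausdorffMeasure_image_le hm0 _
      _ = μH[(m:ℝ)] G := by rw [ENNReal.coe_one, ENNReal.one_rpow, one_mul]
  calc ENNReal.ofReal ((1 - t/ρ) ^ m) * μH[(m:ℝ)] (frontier K)
      = μH[(m:ℝ)] (frontier K') := by rw [hscale, hcdef]
    _ ≤ μH[(m:ℝ)] (frontier Kt) := hstepA
    _ ≤ μH[(m:ℝ)] G := hstepB

/-- Let `K ⊂ ℝ^d` be a convex body, `N` an outer unit normal field on `∂K` (defined a.e.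
w.r.t. the surface measure), and `r(x)` the largest radius `r ≥ 0` with
`B(x - rN(x), r) ⊆ K`. Then for every `α ∈ (0,1)`, `∫_{∂K} r(x)^{-α} dμ(x) < ∞`. -/
theorem stmt_3 (d : ℕ) (K : Set (EuclideanSpace ℝ (Fin d)))
    (hK : IsCompact K) (hKc : Convex ℝ K) (hKi : (interior K).Nonempty)
    (N : EuclideanSpace ℝ (Fin d) → EuclideanSpace ℝ (Fin d))
    (hN : ∀ᵐ x ∂((μH[((d : ℝ) - 1)] : Measure (EuclideanSpace ℝ (Fin d))).restrict
        (frontier K)),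
      ‖N x‖ = 1 ∧ ∀ y ∈ K, (inner ℝ (y - x) (N x) : ℝ) ≤ 0)
    (rK : EuclideanSpace ℝ (Fin d) → ℝ)
    (hr : ∀ x, rK x = sSup {r : ℝ | 0 ≤ r ∧ Metric.closedBall (x - r • N x) r ⊆ K})
    (α : ℝ) (hα : α ∈ Set.Ioo (0 : ℝ) 1) :
    ∫⁻ x in frontier K, (ENNReal.ofReal (rK x)) ^ (-α)
        ∂(μH[((d : ℝ) - 1)] : Measure (EuclideanSpace ℝ (Fin d))) < ⊤ := by
  classical
  rcases Nat.eq_zero_or_pos d with hd0 | hdpos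
  · subst hd0
    have hKuniv : K = Set.univ := by
      obtain ⟨x, hx⟩ := hKi
      have hxK : x ∈ K := interior_subset hx
      ext y
      simp only [Set.mem_univ, iff_true]
      rwa [Subsingleton.elim y x]
    rw [hKuniv, frontier_univ, Measure.restrict_empty, lintegral_zero_measure]
    exact ENNReal.zero_lt_top
  obtain ⟨m, rfl⟩ : ∃ m, d = m + 1 := ⟨d - 1, by omega⟩
  have hdim : ((m + 1 : ℕ) : ℝ) - 1 = (m : ℝ) := by push_cast; ring
  rw [hdim] at hN ⊢
  set μ : Measure (EuclideanSpace ℝ (Fin (m + 1))) := μH[(m : ℝ)] with hμ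
  -- inner ball
  obtain ⟨z₁, hz₁⟩ := hKi
  obtain ⟨ρ₀, hρ₀pos, hρ₀⟩ := Metric.isOpen_iff.1 isOpen_interior z₁ hz₁
  set ρ : ℝ := ρ₀ / 2 with hρdef
  have hρpos : 0 < ρ := by positivity
  have hballK : closedBall z₁ ρ ⊆ K := by
    refine subset_trans ?_ (hρ₀.trans interior_subset)
    intro w hw
    rw [mem_closedBall] at hw
    rw [mem_ball]
    calc dist w z₁ ≤ ρ := hw
      _ < ρ₀ := by rw [hρdef]; linarith
  have hM : μ (frontier K) < ⊤ := sw_surface_fin hK hKc ⟨z₁, hz₁⟩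
  set M : ℝ≥0∞ := μ (frontier K) with hMdef
  -- dyadic radii
  set T : ℝ := ρ / 2 with hT
  have hTpos : 0 < T := by positivity
  set tseq : ℕ → ℝ := fun n => T * (2:ℝ) ^ (-(n:ℝ)) with htseq
  have htpos : ∀ n, 0 < tseq n := by
    intro n
    have : (0:ℝ) < (2:ℝ) ^ (-(n:ℝ)) := Real.rpow_pos_of_pos (by norm_num) _
    positivity
  have htle : ∀ n, tseq n ≤ ρ / 2 := by
    intro n
    have h1 : (2:ℝ) ^ (-(n:ℝ)) ≤ 1 :=
      Real.rpow_le_one_of_one_le_of_nonpos (by norm_num) (neg_nonpos.2 (Nat.cast_nonneg n))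
    calc tseq n ≤ T * 1 := mul_le_mul_of_nonneg_left h1 hTpos.le
      _ = ρ / 2 := by rw [mul_one, hT]
  have hdb : ∀ n, tseq n = 2 * tseq (n + 1) := by
    intro n
    have h2 : (2:ℝ) ^ (-(n:ℝ)) = 2 * (2:ℝ) ^ (-((n+1:ℕ):ℝ)) := by
      rw [show (2:ℝ) * (2:ℝ) ^ (-((n+1:ℕ):ℝ)) = (2:ℝ)^(1:ℝ) * (2:ℝ) ^ (-((n+1:ℕ):ℝ)) by
        rw [Real.rpow_one], ← Real.rpow_add (by norm_num)]
      congr 1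
      push_cast
      ring
    simp only [htseq]
    rw [h2]
    ring
  set Kt : ℕ → Set (EuclideanSpace ℝ (Fin (m + 1))) :=
    fun n => {y | closedBall y (tseq n) ⊆ K} with hKtdef
  have hKtcl : ∀ n, IsClosed (Kt n) := fun n => sw_Kt_closed hK.isClosed (tseq n)
  have hKtne : ∀ n, z₁ ∈ Kt n := by
    intro n w hw
    refine hballK (closedBall_subset_closedBall ?_ hw)
    linarith [htle n]
  have hKtcpt : ∀ n, IsCompact (Kt n) := by
    intro n
    refine hK.of_isClosed_subset (hKtcl n) ?_
    intro y hy
    exact hy (mem_closedBall_self (htpos n).le)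
  set G : ℕ → Set (EuclideanSpace ℝ (Fin (m + 1))) :=
    fun n => {x | x ∈ frontier K ∧ Metric.infDist x (Kt n) ≤ tseq n} with hGdef
  set Bad : ℕ → Set (EuclideanSpace ℝ (Fin (m + 1))) := fun n => frontier K \ G n with hBaddef
  have hGmeas : ∀ n, MeasurableSet (G n) := by
    intro n
    have : G n = frontier K ∩ {x | Metric.infDist x (Kt n) ≤ tseq n} := rfl
    rw [this]
    exact (isClosed_frontier.inter
      (isClosed_le (Metric.continuous_infDist_pt (Kt n)) continuous_const)).measurableSet
  have hBadmeas : ∀ n, MeasurableSet (Bad n) := fun n =>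
    isClosed_frontier.measurableSet.diff (hGmeas n)
  -- measure bound for Bad n
  have hBadbound : ∀ n, μ (Bad n) ≤ ENNReal.ofReal ((m:ℝ) * (tseq n / ρ)) * M := by
    intro n
    have h1 := sw_bad_bound hK hKc hρpos hballK (htpos n) (htle n)
    have h1' : ENNReal.ofReal ((1 - tseq n / ρ) ^ m) * M ≤ μ (G n) := h1
    have h2 : μ (G n) + μ (Bad n) = M := by
      have h3 := measure_inter_add_diff (μ := μ) (frontier K) (hGmeas n)
      rwa [inter_eq_self_of_subset_right (fun x hx => hx.1)] at h3
    have hGfin : μ (G n) ≠ ⊤ := by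
      refine ne_top_of_le_ne_top hM.ne ?_
      rw [hMdef]
      exact measure_mono fun x hx => hx.1
    have h4 : μ (Bad n) = M - μ (G n) :=
      ENNReal.eq_sub_of_add_eq hGfin (by rw [add_comm]; exact h2)
    rw [h4]
    have h5 : M - μ (G n) ≤ M - ENNReal.ofReal ((1 - tseq n / ρ) ^ m) * M :=
      tsub_le_tsub_left h1' M
    refine le_trans h5 ?_
    have h6 : M - ENNReal.ofReal ((1 - tseq n / ρ) ^ m) * M
        = (1 - ENNReal.ofReal ((1 - tseq n / ρ) ^ m)) * M := by
      rw [ENNReal.sub_mul (fun _ _ => hM.ne), one_mul]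
    rw [h6]
    refine mul_le_mul_left ?_ M
    have h9 : tseq n / ρ ≤ 1 / 2 := by
      rw [div_le_div_iff₀ hρpos (by norm_num : (0:ℝ) < 2)]
      linarith [htle n]
    have hc0 : (0:ℝ) ≤ (1 - tseq n / ρ) ^ m := by
      have h0 : (0:ℝ) ≤ 1 - tseq n / ρ := by linarith
      exact pow_nonneg h0 m
    rw [show (1:ℝ≥0∞) = ENNReal.ofReal 1 from ENNReal.ofReal_one.symm,
      ← ENNReal.ofReal_sub 1 hc0]
    refine ENNReal.ofReal_le_ofReal ?_
    have hbern : 1 + (m:ℝ) * (-(tseq n / ρ)) ≤ (1 + (-(tseq n / ρ))) ^ m := by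
      refine one_add_mul_le_pow ?_ m
      linarith
    have h8 : (1 + (-(tseq n / ρ))) ^ m = (1 - tseq n / ρ) ^ m := by ring_nf
    linarith [h8 ▸ hbern]
  -- refined bound with constant CC
  set CC : ℝ := (m:ℝ) * M.toReal / ρ with hCCdef
  have hCC0 : 0 ≤ CC := by positivity
  have hBadbound' : ∀ n, μ (Bad n) ≤ ENNReal.ofReal (CC * tseq n) := by
    intro n
    refine le_trans (hBadbound n) (le_of_eq ?_)
    have hnn : (0:ℝ) ≤ (m:ℝ) * (tseq n / ρ) :=
      mul_nonneg (Nat.cast_nonneg m) (div_nonneg (htpos n).le hρpos.le)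
    calc ENNReal.ofReal ((m:ℝ) * (tseq n / ρ)) * M
        = ENNReal.ofReal ((m:ℝ) * (tseq n / ρ)) * ENNReal.ofReal M.toReal := by
          rw [ENNReal.ofReal_toReal hM.ne]
      _ = ENNReal.ofReal ((m:ℝ) * (tseq n / ρ) * M.toReal) :=
          (ENNReal.ofReal_mul hnn).symm
      _ = ENNReal.ofReal (CC * tseq n) := by
          rw [hCCdef]
          congr 1
          field_simp
  -- the intersection of all bad sets is null
  have hBinfty : μ (⋂ k, Bad k) = 0 := by
    refine le_antisymm ?_ zero_le
    have h1 : ∀ n, μ (⋂ k, Bad k) ≤ ENNReal.ofReal (CC * tseq n) := fun n =>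
      le_trans (measure_mono (iInter_subset _ n)) (hBadbound' n)
    have h5 : ∀ n : ℕ, tseq n = T * ((2:ℝ)⁻¹) ^ n := by
      intro n
      simp only [htseq]
      rw [Real.rpow_neg (by norm_num : (0:ℝ) ≤ 2), Real.rpow_natCast, ← inv_pow]
    have h4 : Filter.Tendsto tseq Filter.atTop (nhds 0) := by
      rw [funext h5]
      have h6 : Filter.Tendsto (fun n : ℕ => ((2:ℝ)⁻¹) ^ n) Filter.atTop (nhds 0) := by
        refine tendsto_pow_atTop_nhds_zero_of_lt_one (by norm_num) (by norm_num)
      have h7 := h6.const_mul T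
      simpa using h7
    have h3 : Filter.Tendsto (fun n : ℕ => CC * tseq n) Filter.atTop (nhds 0) := by
      have h8 := h4.const_mul CC
      simpa using h8
    have h2 : Filter.Tendsto (fun n => ENNReal.ofReal (CC * tseq n)) Filter.atTop (nhds 0) := by
      have h9 := ENNReal.tendsto_ofReal h3
      rwa [ENNReal.ofReal_zero] at h9
    exact ge_of_tendsto' h2 h1
  -- lower bound on rK on good sets
  obtain ⟨Rb, hRb⟩ := hK.isBounded.subset_closedBall z₁
  have hclaim : ∀ x ∈ frontier K, ‖N x‖ = 1 → (∀ y ∈ K, ⟪y - x, N x⟫ ≤ 0) →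
      ∀ n, x ∈ G n → tseq n ≤ rK x := by
    intro x hx hN1 hN2 n hxG
    have hball' : closedBall (x - tseq n • N x) (tseq n) ⊆ K :=
      sw_claimA hK.isClosed (htpos n) ⟨z₁, hKtne n⟩ (hKtcpt n) hx hN1 hN2 hxG.2
    rw [hr x]
    have hbdd : BddAbove {r : ℝ | 0 ≤ r ∧ closedBall (x - r • N x) r ⊆ K} := by
      refine ⟨Rb, fun r hr' => ?_⟩
      obtain ⟨hr0, hrb⟩ := hr'
      have hc2 : x - (2*r) • N x ∈ K := by
        refine hrb ?_
        rw [mem_closedBall, dist_eq_norm]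
        rw [show x - (2*r) • N x - (x - r • N x) = -(r • N x) by module]
        rw [norm_neg, norm_smul, hN1, mul_one, Real.norm_eq_abs, abs_of_nonneg hr0]
      have hd1 : dist x z₁ ≤ Rb := by
        have := hRb (hK.isClosed.frontier_subset hx)
        rwa [mem_closedBall] at this
      have hd2 : dist (x - (2*r) • N x) z₁ ≤ Rb := by
        have := hRb hc2
        rwa [mem_closedBall] at this
      have hd3 : dist x (x - (2*r) • N x) = 2*r := by
        rw [dist_eq_norm, show x - (x - (2*r) • N x) = (2*r) • N x by module,
          norm_smul, hN1, mul_one, Real.norm_eq_abs, abs_of_nonneg (by linarith)]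
      have h4 := dist_triangle x z₁ (x - (2*r) • N x)
      rw [hd3] at h4
      have h5 : dist z₁ (x - (2*r) • N x) = dist (x - (2*r) • N x) z₁ := dist_comm _ _
      linarith
    exact le_csSup hbdd ⟨(htpos n).le, hball'⟩
  -- dominating function
  set c₀ : ℝ≥0∞ := (ENNReal.ofReal (tseq 0))^(-α) with hc₀
  set cn : ℕ → ℝ≥0∞ := fun n => (ENNReal.ofReal (tseq (n+1)))^(-α) with hcn
  set gfun : EuclideanSpace ℝ (Fin (m+1)) → ℝ≥0∞ := fun x =>
    c₀ + (∑' n, (Bad n).indicator (fun _ => cn n) x)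
      + (⋂ k, Bad k).indicator (fun _ => (⊤:ℝ≥0∞)) x with hgfun
  have hmono : ∀ᵐ x ∂(μ.restrict (frontier K)), (ENNReal.ofReal (rK x))^(-α) ≤ gfun x := by
    filter_upwards [hN, ae_restrict_mem isClosed_frontier.measurableSet] with x hNx hxF
    rcases em (x ∈ ⋂ k, Bad k) with hmem | hmem
    · simp only [hgfun, indicator_of_mem hmem]
      simp
    · have hex : ∃ k, x ∈ G k := by
        simp only [mem_iInter, not_forall] at hmem
        obtain ⟨k, hk⟩ := hmem
        refine ⟨k, ?_⟩
        by_contra hkG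
        exact hk ⟨hxF, hkG⟩
      have hn₀ := Nat.find_spec hex
      have hrlow : tseq (Nat.find hex) ≤ rK x := hclaim x hxF hNx.1 hNx.2 _ hn₀
      have hfx : (ENNReal.ofReal (rK x))^(-α)
          ≤ (ENNReal.ofReal (tseq (Nat.find hex)))^(-α) := by
        rw [ENNReal.rpow_neg, ENNReal.rpow_neg]
        exact ENNReal.inv_le_inv.2
          (ENNReal.rpow_le_rpow (ENNReal.ofReal_le_ofReal hrlow) hα.1.le)
      refine le_trans hfx ?_
      cases hfind : Nat.find hex with
      | zero =>
        rw [← hc₀]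
        simp only [hgfun]
        exact le_trans (self_le_add_right _ _) (self_le_add_right _ _)
      | succ k =>
        have hxBad : x ∈ Bad k := by
          have hkG : x ∉ G k := by
            intro hGk
            exact Nat.find_min hex (by rw [hfind]; exact Nat.lt_succ_self k) hGk
          exact ⟨hxF, hkG⟩
        have hterm : cn k ≤ ∑' j, (Bad j).indicator (fun _ => cn j) x := by
          have h5 := ENNReal.le_tsum (f := fun j => (Bad j).indicator (fun _ => cn j) x) k
          rwa [indicator_of_mem hxBad] at h5
        have hcnk : (ENNReal.ofReal (tseq (k+1)))^(-α) = cn k := by rw [hcn]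
        rw [hcnk]
        simp only [hgfun]
        exact le_trans hterm (le_trans le_add_self (self_le_add_right _ _))
  -- integrate the dominating function
  have hmeas_ind : ∀ n, Measurable ((Bad n).indicator (fun _ => cn n)) := fun n =>
    measurable_const.indicator (hBadmeas n)
  have hmeas_sum : Measurable (fun x => ∑' n, (Bad n).indicator (fun _ => cn n) x) :=
    Measurable.ennreal_tsum hmeas_ind
  have hrest : ∀ n, (μ.restrict (frontier K)) (Bad n) = μ (Bad n) := by
    intro n
    rw [Measure.restrict_apply (hBadmeas n)]
    congr 1
    exact inter_eq_self_of_subset_left diff_subset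
  have hint : ∫⁻ x in frontier K, gfun x ∂μ ≤ c₀ * M + ∑' n, cn n * μ (Bad n) := by
    have e0 : ∫⁻ x in frontier K, gfun x ∂μ
        = ∫⁻ x in frontier K, (c₀ + (∑' n, (Bad n).indicator (fun _ => cn n) x)) ∂μ
          + ∫⁻ x in frontier K, (⋂ k, Bad k).indicator (fun _ => (⊤:ℝ≥0∞)) x ∂μ := by
      rw [hgfun]
      exact lintegral_add_right _ (measurable_const.indicator (MeasurableSet.iInter hBadmeas))
    have e1 : ∫⁻ x in frontier K, (⋂ k, Bad k).indicator (fun _ => (⊤:ℝ≥0∞)) x ∂μ = 0 := by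
      rw [lintegral_indicator (MeasurableSet.iInter hBadmeas), setLIntegral_const]
      refine mul_eq_zero.2 (Or.inr ?_)
      rw [Measure.restrict_apply (MeasurableSet.iInter hBadmeas)]
      exact measure_mono_null inter_subset_left hBinfty
    have e2 : ∫⁻ x in frontier K, (c₀ + (∑' n, (Bad n).indicator (fun _ => cn n) x)) ∂μ
        = c₀ * (μ.restrict (frontier K)) univ
          + ∫⁻ x in frontier K, (∑' n, (Bad n).indicator (fun _ => cn n) x) ∂μ := by
      rw [lintegral_add_right _ hmeas_sum, lintegral_const]
    have e3 : ∫⁻ x in frontier K, (∑' n, (Bad n).indicator (fun _ => cn n) x) ∂μ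
        = ∑' n, cn n * μ (Bad n) := by
      rw [lintegral_tsum fun n => (hmeas_ind n).aemeasurable]
      congr 1
      ext n
      rw [lintegral_indicator (hBadmeas n), setLIntegral_const, hrest n]
    rw [e0, e1, e2, e3, add_zero, Measure.restrict_apply_univ]
  -- geometric series bound
  set β : ℝ := 1 - α with hβdef
  have hβpos : 0 < β := by rw [hβdef]; linarith [hα.2]
  set r : ℝ := (2:ℝ) ^ (-β) with hrdef
  have hr0 : 0 < r := Real.rpow_pos_of_pos (by norm_num) _
  have hr1 : r < 1 := by
    rw [hrdef]
    exact Real.rpow_lt_one_of_one_lt_of_neg (by norm_num) (by linarith)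
  set A : ℝ := 2 * CC * T ^ β * r with hAdef
  have hA0 : 0 ≤ A := by
    have := Real.rpow_nonneg hTpos.le β
    rw [hAdef]
    positivity
  have hre : ∀ n, (tseq (n+1))^(-α) * (CC * tseq n) = A * r^n := by
    intro n
    rw [hdb n]
    have h2 : (tseq (n+1))^(-α) * (CC * (2 * tseq (n+1)))
        = 2 * CC * ((tseq (n+1))^(-α) * tseq (n+1)) := by ring
    rw [h2]
    have h4 : (tseq (n+1))^β = (tseq (n+1))^(1:ℝ) * (tseq (n+1))^(-α) := by
      rw [← Real.rpow_add (htpos (n+1)), hβdef]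
      ring_nf
    have h3 : (tseq (n+1))^(-α) * tseq (n+1) = (tseq (n+1))^β := by
      rw [h4, Real.rpow_one]
      ring
    rw [h3]
    have h5 : (tseq (n+1))^β = T^β * r^(n+1) := by
      simp only [htseq]
      rw [Real.mul_rpow hTpos.le (Real.rpow_nonneg (by norm_num) _)]
      congr 1
      rw [hrdef]
      rw [← Real.rpow_natCast ((2:ℝ)^(-β)) (n+1), ← Real.rpow_mul (by norm_num : (0:ℝ) ≤ 2),
        ← Real.rpow_mul (by norm_num : (0:ℝ) ≤ 2)]
      congr 1
      push_cast
      ring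
    rw [h5, hAdef, pow_succ]
    ring
  have hterm2 : ∀ n, cn n * μ (Bad n) ≤ ENNReal.ofReal A * (ENNReal.ofReal r)^n := by
    intro n
    have e1 : cn n = ENNReal.ofReal ((tseq (n+1)) ^ (-α)) := by
      rw [hcn]
      exact ENNReal.ofReal_rpow_of_pos (htpos (n+1))
    calc cn n * μ (Bad n)
        ≤ ENNReal.ofReal ((tseq (n+1))^(-α)) * ENNReal.ofReal (CC * tseq n) := by
          rw [e1]
          exact mul_le_mul_right (hBadbound' n) _
      _ = ENNReal.ofReal ((tseq (n+1))^(-α) * (CC * tseq n)) :=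
          (ENNReal.ofReal_mul (Real.rpow_nonneg (htpos (n+1)).le _)).symm
      _ = ENNReal.ofReal (A * r^n) := by rw [hre n]
      _ = ENNReal.ofReal A * ENNReal.ofReal (r^n) := ENNReal.ofReal_mul hA0
      _ = ENNReal.ofReal A * (ENNReal.ofReal r)^n := by rw [ENNReal.ofReal_pow hr0.le]
  calc ∫⁻ x in frontier K, (ENNReal.ofReal (rK x)) ^ (-α) ∂μ
      ≤ ∫⁻ x in frontier K, gfun x ∂μ := lintegral_mono_ae hmono
    _ ≤ c₀ * M + ∑' n, cn n * μ (Bad n) := hint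
    _ < ⊤ := by
        refine ENNReal.add_lt_top.2 ⟨?_, ?_⟩
        · have hc₀fin : c₀ ≠ ⊤ := by
            rw [hc₀, ENNReal.ofReal_rpow_of_pos (htpos 0)]
            exact ENNReal.ofReal_ne_top
          exact ENNReal.mul_lt_top (lt_top_iff_ne_top.2 hc₀fin) hM
        · have h1 : ∑' n, cn n * μ (Bad n)
              ≤ ∑' n, ENNReal.ofReal A * (ENNReal.ofReal r)^n := ENNReal.tsum_le_tsum hterm2
          have h2 : ∑' n, ENNReal.ofReal A * (ENNReal.ofReal r)^n
              = ENNReal.ofReal A * (1 - ENNReal.ofReal r)⁻¹ := by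
            rw [ENNReal.tsum_mul_left, ENNReal.tsum_geometric]
          have h3 : (1 - ENNReal.ofReal r)⁻¹ ≠ ⊤ := by
            rw [ENNReal.inv_ne_top]
            intro hcon
            have h4 : (1:ℝ≥0∞) ≤ ENNReal.ofReal r := tsub_eq_zero_iff_le.1 hcon
            have h5 : ENNReal.ofReal r < 1 := ENNReal.ofReal_lt_one.2 hr1
            exact absurd h4 (not_le.2 h5)
          refine lt_of_le_of_lt h1 ?_
          rw [h2]
          exact ENNReal.mul_lt_top ENNReal.ofReal_lt_top (lt_top_iff_ne_top.2 h3)
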